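/- Suppose β̂ ∉ {z, −z} and D := γ_{β,β̂} − γ_{β,z} γ_{β̂,z} > 0. Then ρ* = (γ_{β,z} − γ_{β,β̂} γ_{β̂,z}) / D satisfies: (a) β̂(ρ*) ∈ S_β, i.e., γ_{β,z} − γ_{β̂(ρ*),z} γ_{β̂(ρ*),β} = 0; and (b) ρ* maximizes the function ρ ↦ γ_{β, β̂(ρ)} over ρ ∈ ℝ. -/

import Mathlib

open Filter
open scoped Topology

/-- Euclidean inner product on `Fin N → ℝ`. -/
noncomputable def dotp {N : ℕ} (x y : Fin N → ℝ) : ℝ := ∑ i, x i * y i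

/-- The point `β̂(ρ) = (β̂ + ρ z)/‖β̂ + ρ z‖₂` on the geodesic through `β̂` and `z`. -/
noncomputable def geo {N : ℕ} (b z : Fin N → ℝ) (ρ : ℝ) : Fin N → ℝ :=
  fun i => (b i + ρ * z i) / Real.sqrt (∑ j, (b j + ρ * z j) ^ 2)

lemma dotp_comm' {N : ℕ} (x y : Fin N → ℝ) : dotp x y = dotp y x := by
  simp [dotp, mul_comm]

/-- if `β̂ ∉ {z, −z}` and `D = γ_{β,β̂} − γ_{β,z} γ_{β̂,z} > 0`, then
`ρ* = (γ_{β,z} − γ_{β,β̂} γ_{β̂,z})/D` satisfies (a) `β̂(ρ*) ∈ S_β`, i.e.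
`γ_{β,z} − γ_{β̂(ρ*),z} γ_{β̂(ρ*),β} = 0`, and (b) `ρ*` maximizes `ρ ↦ γ_{β,β̂(ρ)}`. -/
theorem dispersion_bias_stmt6
    (N : ℕ) (hN : 2 ≤ N) (β bhat z : Fin N → ℝ)
    (hβ : dotp β β = 1) (hb : dotp bhat bhat = 1) (hz : dotp z z = 1)
    (hbz : bhat ≠ z) (hbz' : bhat ≠ -z)
    (hD : 0 < dotp β bhat - dotp β z * dotp bhat z)
    (ρstar : ℝ)
    (hρ : ρstar = (dotp β z - dotp β bhat * dotp bhat z)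
        / (dotp β bhat - dotp β z * dotp bhat z)) :
    (dotp β z - dotp (geo bhat z ρstar) z * dotp (geo bhat z ρstar) β = 0) ∧
    (∀ ρ : ℝ, dotp β (geo bhat z ρ) ≤ dotp β (geo bhat z ρstar)) := by
  set a := dotp β bhat with ha
  set c := dotp β z with hc
  set d := dotp bhat z with hd
  -- norm squared along the geodesic
  have hsum : ∀ ρ : ℝ, (∑ j, (bhat j + ρ * z j) ^ 2) = 1 + 2 * d * ρ + ρ ^ 2 := by
    intro ρ
    have h1 : ∀ j, (bhat j + ρ * z j) ^ 2
        = bhat j * bhat j + (2 * ρ) * (bhat j * z j) + ρ ^ 2 * (z j * z j) := by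
      intro j; ring
    simp_rw [h1, Finset.sum_add_distrib, ← Finset.mul_sum]
    have e1 : (∑ j, bhat j * bhat j) = 1 := hb
    have e2 : (∑ j, bhat j * z j) = d := rfl
    have e3 : (∑ j, z j * z j) = 1 := hz
    rw [e1, e2, e3]; ring
  -- |d| < 1
  have hd1 : d ^ 2 ≤ 1 := by
    have h := Finset.sum_mul_sq_le_sq_mul_sq Finset.univ bhat z
    have e1 : (∑ j, bhat j ^ 2) = 1 := by simpa [sq, dotp] using hb
    have e3 : (∑ j, z j ^ 2) = 1 := by simpa [sq, dotp] using hz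
    have e2 : (∑ j, bhat j * z j) = d := rfl
    rw [e1, e2, e3] at h; linarith
  have hdne1 : d ≠ 1 := by
    intro h1
    apply hbz
    have hsum0 : (∑ j, (bhat j - z j) ^ 2) = 0 := by
      have h2 : ∀ j, (bhat j - z j) ^ 2
          = bhat j * bhat j - 2 * (bhat j * z j) + z j * z j := by intro j; ring
      simp_rw [h2, Finset.sum_add_distrib, Finset.sum_sub_distrib, ← Finset.mul_sum]
      have e1 : (∑ j, bhat j * bhat j) = 1 := hb
      have e2 : (∑ j, bhat j * z j) = d := rfl
      have e3 : (∑ j, z j * z j) = 1 := hz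
      rw [e1, e2, e3, h1]; ring
    funext j
    have := (Finset.sum_eq_zero_iff_of_nonneg (fun i _ => sq_nonneg (bhat i - z i))).1
      hsum0 j (Finset.mem_univ j)
    have : bhat j - z j = 0 := by nlinarith [sq_nonneg (bhat j - z j)]
    linarith
  have hdne1' : d ≠ -1 := by
    intro h1
    apply hbz'
    have hsum0 : (∑ j, (bhat j + z j) ^ 2) = 0 := by
      have h2 : ∀ j, (bhat j + z j) ^ 2
          = bhat j * bhat j + 2 * (bhat j * z j) + z j * z j := by intro j; ring
      simp_rw [h2, Finset.sum_add_distrib, ← Finset.mul_sum]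
      have e1 : (∑ j, bhat j * bhat j) = 1 := hb
      have e2 : (∑ j, bhat j * z j) = d := rfl
      have e3 : (∑ j, z j * z j) = 1 := hz
      rw [e1, e2, e3, h1]; ring
    funext j
    have := (Finset.sum_eq_zero_iff_of_nonneg (fun i _ => sq_nonneg (bhat i + z i))).1
      hsum0 j (Finset.mem_univ j)
    have : bhat j + z j = 0 := by nlinarith [sq_nonneg (bhat j + z j)]
    simp [Pi.neg_apply]; linarith
  have hd2 : d ^ 2 < 1 := by
    rcases lt_or_eq_of_le hd1 with h | h
    · exact h
    · exfalso
      have : (d - 1) * (d + 1) = 0 := by nlinarith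
      rcases mul_eq_zero.1 this with h' | h'
      · exact hdne1 (by linarith)
      · exact hdne1' (by linarith)
  -- positivity of the norm squared
  have hpos : ∀ ρ : ℝ, 0 < 1 + 2 * d * ρ + ρ ^ 2 := by
    intro ρ; nlinarith [sq_nonneg (ρ + d)]
  have hspos : ∀ ρ : ℝ, 0 < Real.sqrt (1 + 2 * d * ρ + ρ ^ 2) := fun ρ =>
    Real.sqrt_pos.2 (hpos ρ)
  have hssq : ∀ ρ : ℝ, Real.sqrt (1 + 2 * d * ρ + ρ ^ 2) ^ 2 = 1 + 2 * d * ρ + ρ ^ 2 :=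
    fun ρ => Real.sq_sqrt (hpos ρ).le
  -- dot products with geodesic points
  have hgeo : ∀ (x : Fin N → ℝ) (ρ : ℝ), dotp x (geo bhat z ρ)
      = (dotp x bhat + ρ * dotp x z) / Real.sqrt (1 + 2 * d * ρ + ρ ^ 2) := by
    intro x ρ
    simp only [dotp, geo]
    rw [hsum ρ]
    have h1 : ∀ i, x i * ((bhat i + ρ * z i) / Real.sqrt (1 + 2 * d * ρ + ρ ^ 2))
        = (x i * bhat i + ρ * (x i * z i)) / Real.sqrt (1 + 2 * d * ρ + ρ ^ 2) := by
      intro i; field_simp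
    simp_rw [h1, ← Finset.sum_div, Finset.sum_add_distrib, ← Finset.mul_sum]
  have hgeo1 : ∀ ρ : ℝ, dotp β (geo bhat z ρ)
      = (a + ρ * c) / Real.sqrt (1 + 2 * d * ρ + ρ ^ 2) := fun ρ => hgeo β ρ
  have hgeo2 : ∀ ρ : ℝ, dotp (geo bhat z ρ) z
      = (d + ρ) / Real.sqrt (1 + 2 * d * ρ + ρ ^ 2) := by
    intro ρ
    rw [dotp_comm', hgeo z ρ, dotp_comm' z bhat, hz]
    norm_num
    rfl
  have hgeo3 : ∀ ρ : ℝ, dotp (geo bhat z ρ) β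
      = (a + ρ * c) / Real.sqrt (1 + 2 * d * ρ + ρ ^ 2) := by
    intro ρ
    rw [dotp_comm', hgeo β ρ]
  have hDne : a - c * d ≠ 0 := ne_of_gt hD
  -- E
  obtain ⟨E, hE⟩ : ∃ E : ℝ, E = a ^ 2 + c ^ 2 - 2 * a * c * d := ⟨_, rfl⟩
  have hEpos : 0 < E := by
    rw [hE]
    nlinarith [mul_pos hD hD, mul_nonneg (sq_nonneg c) (by nlinarith : (0:ℝ) ≤ 1 - d ^ 2)]
  -- evaluation at ρstar
  have hnum : a + ρstar * c = E / (a - c * d) := by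
    rw [hE, hρ]; field_simp; ring
  have hden : 1 + 2 * d * ρstar + ρstar ^ 2 = (1 - d ^ 2) * E / (a - c * d) ^ 2 := by
    rw [hE, hρ]; field_simp [show a - d * c ≠ 0 by rwa [mul_comm]]; ring
  constructor
  · -- part (a)
    rw [hgeo2, hgeo3, div_mul_div_comm, Real.mul_self_sqrt (hpos ρstar).le,
      sub_eq_zero, eq_comm, div_eq_iff (ne_of_gt (hpos ρstar)), hρ]
    field_simp [show a - d * c ≠ 0 by rwa [mul_comm]]; ring
  · -- part (b)
    intro ρ
    rw [hgeo1, hgeo1]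
    have h1md : 0 < 1 - d ^ 2 := by linarith
    have hnum' : (a + ρstar * c) * (a - c * d) = E := by
      rw [hE, hρ]; field_simp; ring
    have hden' : (1 + 2 * d * ρstar + ρstar ^ 2) * (a - c * d) ^ 2 = (1 - d ^ 2) * E := by
      rw [hE, hρ]; field_simp [show a - d * c ≠ 0 by rwa [mul_comm]]; ring
    have hnumpos : 0 < a + ρstar * c := by
      have h := div_pos hEpos hD
      rwa [← hnum', mul_div_assoc, div_self hDne, mul_one] at h
    have hRHSpos : 0 < (a + ρstar * c) / Real.sqrt (1 + 2 * d * ρstar + ρstar ^ 2) :=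
      div_pos hnumpos (hspos ρstar)
    rcases le_or_gt (a + ρ * c) 0 with hle | hlt
    · calc (a + ρ * c) / Real.sqrt (1 + 2 * d * ρ + ρ ^ 2) ≤ 0 :=
          div_nonpos_of_nonpos_of_nonneg hle (hspos ρ).le
        _ ≤ _ := hRHSpos.le
    · -- both positive; compare squares
      have hkey : (1 - d ^ 2) * (a + ρ * c) ^ 2 ≤ E * (1 + 2 * d * ρ + ρ ^ 2) := by
        have hid : E * (1 + 2 * d * ρ + ρ ^ 2) - (1 - d ^ 2) * (a + ρ * c) ^ 2
            = ((a - c * d) * ρ - (c - a * d)) ^ 2 := by rw [hE]; ring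
        linarith [sq_nonneg ((a - c * d) * ρ - (c - a * d))]
      have hG : ((a + ρ * c) ^ 2 * (1 + 2 * d * ρstar + ρstar ^ 2)) * (a - c * d) ^ 2
          ≤ ((a + ρstar * c) ^ 2 * (1 + 2 * d * ρ + ρ ^ 2)) * (a - c * d) ^ 2 := by
        calc ((a + ρ * c) ^ 2 * (1 + 2 * d * ρstar + ρstar ^ 2)) * (a - c * d) ^ 2
            = (a + ρ * c) ^ 2 * ((1 + 2 * d * ρstar + ρstar ^ 2) * (a - c * d) ^ 2) := by
              ring
          _ = ((1 - d ^ 2) * (a + ρ * c) ^ 2) * E := by rw [hden']; ring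
          _ ≤ (E * (1 + 2 * d * ρ + ρ ^ 2)) * E :=
              mul_le_mul_of_nonneg_right hkey hEpos.le
          _ = E ^ 2 * (1 + 2 * d * ρ + ρ ^ 2) := by ring
          _ = ((a + ρstar * c) ^ 2 * (1 + 2 * d * ρ + ρ ^ 2)) * (a - c * d) ^ 2 := by
              rw [← hnum']; ring
      have hsq : ((a + ρ * c) / Real.sqrt (1 + 2 * d * ρ + ρ ^ 2)) ^ 2
          ≤ ((a + ρstar * c) / Real.sqrt (1 + 2 * d * ρstar + ρstar ^ 2)) ^ 2 := by
        rw [div_pow, div_pow, hssq ρ, hssq ρstar,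
          div_le_div_iff₀ (hpos ρ) (hpos ρstar)]
        exact le_of_mul_le_mul_right hG (pow_pos hD 2)
      have h1 : 0 ≤ (a + ρ * c) / Real.sqrt (1 + 2 * d * ρ + ρ ^ 2) :=
        (div_pos hlt (hspos ρ)).le
      calc (a + ρ * c) / Real.sqrt (1 + 2 * d * ρ + ρ ^ 2)
          = Real.sqrt (((a + ρ * c) / Real.sqrt (1 + 2 * d * ρ + ρ ^ 2)) ^ 2) :=
            (Real.sqrt_sq h1).symm
        _ ≤ Real.sqrt (((a + ρstar * c) / Real.sqrt (1 + 2 * d * ρstar + ρstar ^ 2)) ^ 2) :=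
            Real.sqrt_le_sqrt hsq
        _ = _ := Real.sqrt_sq hRHSpos.le
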